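/- arXiv:2301.01880 — 3 statements merged into one kernel-verified Lean document; each statement's English description precedes it below -/
import Mathlib

section
/- Let A ∈ GL₂(ℝ) have finite order, determinant 1, and preserve a lattice L = ℤa + ℤb spanned by two linearly independent vectors a, b ∈ ℝ². Then the order of A is 1, 2, 3, 4, or 6. -/
open Matrix

/-- Cayley–Hamilton for 2×2 matrices. -/
lemma ch2 (A : Matrix (Fin 2) (Fin 2) ℝ) :
    A * A = A.trace • A - A.det • 1 := by
  ext i j
  fin_cases i <;> fin_cases j <;>
    simp [Matrix.mul_apply, Fin.sum_univ_two, Matrix.trace_fin_two,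
      Matrix.det_fin_two, Matrix.one_apply] <;> ring

def cseq (t : ℤ) : ℕ → ℤ
  | 0 => 0
  | 1 => 1
  | (n+2) => t * cseq t (n+1) - cseq t n

lemma cseq_pow (A : Matrix (Fin 2) (Fin 2) ℝ) (t : ℤ)
    (h : A * A = (t : ℝ) • A - 1) :
    ∀ n, A ^ (n+1) = (cseq t (n+1) : ℝ) • A - (cseq t n : ℝ) • 1
  | 0 => by simp [cseq]
  | (n+1) => by
    have ih := cseq_pow A t h n
    rw [pow_succ, ih]
    show _ = (((t * cseq t (n+1) - cseq t n : ℤ)) : ℝ) • A - (cseq t (n+1) : ℝ) • 1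
    push_cast
    rw [sub_mul, smul_mul_assoc, smul_mul_assoc, h, one_mul]
    module

lemma cseq_growth (t : ℤ) (ht : 3 ≤ |t|) :
    ∀ n, |cseq t n| < |cseq t (n+1)|
  | 0 => by simp [cseq]
  | (n+1) => by
    have ih := cseq_growth t ht n
    have h0 : (0:ℤ) ≤ |cseq t n| := abs_nonneg _
    show |cseq t (n+1)| < |t * cseq t (n+1) - cseq t n|
    have key : |t| * |cseq t (n+1)| - |cseq t n| ≤ |t * cseq t (n+1) - cseq t n| := by
      rw [← abs_mul]
      exact abs_sub_abs_le_abs_sub _ _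
    nlinarith [abs_nonneg (cseq t (n+1))]

lemma cseq_ne (t : ℤ) (ht : 3 ≤ |t|) (n : ℕ) : cseq t (n+1) ≠ 0 := by
  have h : ∀ m, 0 < |cseq t (m+1)| := by
    intro m
    induction m with
    | zero => simp [cseq]
    | succ m ih => exact lt_trans ih (cseq_growth t ht (m+1))
  intro hc
  have := h n
  rw [hc] at this
  simp at this

lemma unip (N : Matrix (Fin 2) (Fin 2) ℝ) (hN : N * N = 0) :
    ∀ n : ℕ, ((1 : Matrix (Fin 2) (Fin 2) ℝ) + N) ^ n = 1 + (n : ℝ) • N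
  | 0 => by simp
  | (n+1) => by
    rw [pow_succ, unip N hN n, add_mul, mul_add, mul_add, one_mul, mul_one,
      smul_mul_assoc, hN, smul_zero, add_zero, Nat.cast_add, Nat.cast_one, add_smul, one_smul, one_mul]
    module
theorem stmt5 (A : Matrix (Fin 2) (Fin 2) ℝ) (hdet : A.det = 1)
    (hfin : ∃ k : ℕ, 1 ≤ k ∧ A ^ k = 1)
    (a b : Fin 2 → ℝ) (hab : LinearIndependent ℝ ![a, b])
    (L : Set (Fin 2 → ℝ)) (hL : L = {v | ∃ m l : ℤ, v = m • a + l • b})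
    (hpres : A.mulVec '' L = L) :
    orderOf A = 1 ∨ orderOf A = 2 ∨ orderOf A = 3 ∨
      orderOf A = 4 ∨ orderOf A = 6 := by
  subst hL
  obtain ⟨k, hk1, hkA⟩ := hfin
  have hAfin : IsOfFinOrder A := isOfFinOrder_iff_pow_eq_one.mpr ⟨k, hk1, hkA⟩
  have hpos : 0 < orderOf A := hAfin.orderOf_pos
  have ha : a ∈ {v : Fin 2 → ℝ | ∃ m l : ℤ, v = m • a + l • b} := ⟨1, 0, by simp⟩
  have hbmem : b ∈ {v : Fin 2 → ℝ | ∃ m l : ℤ, v = m • a + l • b} := ⟨0, 1, by simp⟩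
  obtain ⟨m, l, hml⟩ : ∃ m l : ℤ, A.mulVec a = m • a + l • b := by
    have := Set.mem_image_of_mem A.mulVec ha
    rw [hpres] at this; exact this
  obtain ⟨p, q, hpq⟩ : ∃ p q : ℤ, A.mulVec b = p • a + q • b := by
    have := Set.mem_image_of_mem A.mulVec hbmem
    rw [hpres] at this; exact this
  -- the trace of A is an integer
  have hcard : Fintype.card (Fin 2) = Module.finrank ℝ (Fin 2 → ℝ) := by simp
  set b' : Module.Basis (Fin 2) ℝ (Fin 2 → ℝ) := basisOfLinearIndependentOfCardEqFinrank hab hcard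
    with hb'def
  have hb'c : ⇑b' = ![a, b] := coe_basisOfLinearIndependentOfCardEqFinrank hab hcard
  have hb'0 : b' 0 = a := by rw [hb'c]; rfl
  have hb'1 : b' 1 = b := by rw [hb'c]; rfl
  have key : ∀ (u v : ℤ) (i : Fin 2),
      b'.repr ((u : ℤ) • a + (v : ℤ) • b) i = ![(u : ℝ), (v : ℝ)] i := by
    intro u v i
    have h1 : (u • a + v • b : Fin 2 → ℝ) = (u : ℝ) • b' 0 + (v : ℝ) • b' 1 := by
      rw [hb'0, hb'1, Int.cast_smul_eq_zsmul, Int.cast_smul_eq_zsmul]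
    rw [h1]
    fin_cases i <;> simp [Module.Basis.repr_self, Finsupp.single_apply]
  obtain ⟨t, htr⟩ : ∃ t : ℤ, A.trace = (t : ℝ) := by
    refine ⟨m + q, ?_⟩
    have e1 : LinearMap.trace ℝ _ (Matrix.toLin' A) = Matrix.trace A := by
      rw [LinearMap.trace_eq_matrix_trace ℝ (Pi.basisFun ℝ (Fin 2)),
        LinearMap.toMatrix_eq_toMatrix', LinearMap.toMatrix'_toLin']
    have e2 : LinearMap.trace ℝ _ (Matrix.toLin' A)
        = Matrix.trace (LinearMap.toMatrix b' b' (Matrix.toLin' A)) :=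
      LinearMap.trace_eq_matrix_trace ℝ b' _
    rw [← e1, e2, Matrix.trace_fin_two]
    have f0 : (LinearMap.toMatrix b' b' (Matrix.toLin' A)) 0 0 = (m : ℝ) := by
      rw [LinearMap.toMatrix_apply, hb'0, Matrix.toLin'_apply]
      have : A *ᵥ a = m • a + l • b := hml
      rw [this, key m l 0]; simp
    have f1 : (LinearMap.toMatrix b' b' (Matrix.toLin' A)) 1 1 = (q : ℝ) := by
      rw [LinearMap.toMatrix_apply, hb'1, Matrix.toLin'_apply]
      have : A *ᵥ b = p • a + q • b := hpq
      rw [this, key p q 1]; simp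
    rw [f0, f1]; push_cast; ring
  -- Cayley–Hamilton
  have hC : A * A = (t : ℝ) • A - 1 := by
    rw [ch2, hdet, htr, one_smul]
  -- the trace is bounded
  have htle : -2 ≤ t ∧ t ≤ 2 := by
    by_contra hcon
    have ht3 : 3 ≤ |t| := le_abs.mpr (by omega)
    obtain ⟨k', rfl⟩ : ∃ k', k = k' + 1 := ⟨k - 1, by omega⟩
    have hp := cseq_pow A t hC k'
    rw [hkA] at hp
    have hck := cseq_ne t ht3 k'
    have hc1 : ((cseq t (k' + 1) : ℤ) : ℝ) ≠ 0 := Int.cast_ne_zero.mpr hck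
    have h2 : ((cseq t (k' + 1) : ℤ) : ℝ) • A
        = ((1 + cseq t k' : ℤ) : ℝ) • (1 : Matrix (Fin 2) (Fin 2) ℝ) := by
      have hp' : ((cseq t (k' + 1) : ℤ) : ℝ) • A
          = 1 + ((cseq t k' : ℤ) : ℝ) • (1 : Matrix (Fin 2) (Fin 2) ℝ) :=
        sub_eq_iff_eq_add.mp hp.symm
      rw [hp']
      push_cast
      module
    set r : ℝ := ((1 + cseq t k' : ℤ) : ℝ) / ((cseq t (k' + 1) : ℤ) : ℝ) with hrdef
    have hA : A = r • (1 : Matrix (Fin 2) (Fin 2) ℝ) := by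
      calc A = ((cseq t (k' + 1) : ℤ) : ℝ)⁻¹ • (((cseq t (k' + 1) : ℤ) : ℝ) • A) := by
              rw [smul_smul, inv_mul_cancel₀ hc1, one_smul]
        _ = r • 1 := by rw [h2, smul_smul, hrdef, div_eq_inv_mul]
    have htr2 : (t : ℝ) = r * 2 := by
      rw [← htr, hA]
      simp [Matrix.trace_smul, Matrix.trace_one]
    have hdr : r ^ 2 = 1 := by
      have h := hdet
      rw [hA] at h
      simpa [Matrix.det_smul] using h
    have ht4 : (t : ℝ) ^ 2 = 4 := by rw [htr2]; nlinarith
    have ht4' : t ^ 2 = 4 := by exact_mod_cast ht4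
    nlinarith [sq_abs t, ht3, abs_nonneg t]
  obtain ⟨hge, hle⟩ := htle
  interval_cases t
  · -- t = -2  : A = -1
    have h2 : A * A = 1 + (-2:ℝ) • (A + 1) := by
      rw [hC]; push_cast; module
    have hM : (A + 1) * (A + 1) = 0 := by
      have e : (A + 1) * (A + 1) = A * A + A + A + 1 := by noncomm_ring
      rw [e, h2]; module
    have hNN : ((-2:ℝ) • (A + 1)) * ((-2:ℝ) • (A + 1)) = 0 := by
      rw [smul_mul_assoc, mul_smul_comm, hM]; simp
    have h4 : A ^ 2 = 1 + (-2:ℝ) • (A + 1) := by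
      rw [pow_two, h2]
    have h5 : ((1 : Matrix (Fin 2) (Fin 2) ℝ) + (-2:ℝ) • (A + 1)) ^ k = 1 := by
      rw [← h4, ← pow_mul, mul_comm, pow_mul, hkA, one_pow]
    rw [unip _ hNN k] at h5
    have h6 : (k : ℝ) • ((-2:ℝ) • (A + 1)) = 0 := by
      rwa [add_eq_left] at h5
    have hk0 : (k : ℝ) ≠ 0 := Nat.cast_ne_zero.mpr (by omega)
    have h7 : A + 1 = 0 := by
      rcases smul_eq_zero.mp h6 with h | h
      · exact absurd h hk0
      · rcases smul_eq_zero.mp h with h' | h'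
        · norm_num at h'
        · exact h'
    have hA1 : A = -1 := by
      have := eq_neg_of_add_eq_zero_left h7
      exact this
    have h8 : A ^ 2 = 1 := by rw [hA1]; simp
    have hdvd : orderOf A ∣ 2 := orderOf_dvd_of_pow_eq_one h8
    rcases (Nat.dvd_prime Nat.prime_two).mp hdvd with h | h <;> omega
  · -- t = -1 : A ^ 3 = 1
    have h2 : A * A = -A - 1 := by rw [hC]; push_cast; module
    have h3 : A ^ 3 = 1 := by
      have e : A ^ 3 = A * A * A := by rw [pow_succ, pow_two]
      rw [e, h2]
      have e2 : (-A - 1) * A = -(A * A) - A := by noncomm_ring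
      rw [e2, h2]; module
    have hdvd : orderOf A ∣ 3 := orderOf_dvd_of_pow_eq_one h3
    rcases (Nat.dvd_prime Nat.prime_three).mp hdvd with h | h <;> omega
  · -- t = 0 : A ^ 4 = 1
    have h2 : A ^ 2 = -1 := by rw [pow_two, hC]; push_cast; module
    have h4 : A ^ 4 = 1 := by
      rw [show (4:ℕ) = 2 * 2 from rfl, pow_mul, h2]
      simp
    have hdvd : orderOf A ∣ 4 := orderOf_dvd_of_pow_eq_one h4
    have hle4 : orderOf A ≤ 4 := Nat.le_of_dvd (by norm_num) hdvd
    interval_cases h : (orderOf A) <;> omega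
  · -- t = 1 : A ^ 6 = 1
    have h2 : A * A = A - 1 := by rw [hC]; push_cast; module
    have h3 : A ^ 3 = -1 := by
      have e : A ^ 3 = A * A * A := by rw [pow_succ, pow_two]
      rw [e, h2]
      have e2 : (A - 1) * A = A * A - A := by noncomm_ring
      rw [e2, h2]; module
    have h6 : A ^ 6 = 1 := by
      rw [show (6:ℕ) = 3 * 2 from rfl, pow_mul, h3]
      simp
    have hdvd : orderOf A ∣ 6 := orderOf_dvd_of_pow_eq_one h6
    have hle6 : orderOf A ≤ 6 := Nat.le_of_dvd (by norm_num) hdvd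
    interval_cases h : (orderOf A) <;> omega
  · -- t = 2 : A = 1
    have h2 : A * A = (2:ℝ) • A - 1 := by rw [hC]; push_cast; rfl
    have hN : (A - 1) * (A - 1) = 0 := by
      have e : (A - 1) * (A - 1) = A * A - A - A + 1 := by noncomm_ring
      rw [e, h2]; module
    have h4 : A = 1 + (A - 1) := by abel
    have h5 : ((1 : Matrix (Fin 2) (Fin 2) ℝ) + (A - 1)) ^ k = 1 := by
      rw [← h4, hkA]
    rw [unip _ hN k] at h5
    have h6 : (k : ℝ) • (A - 1) = 0 := by rwa [add_eq_left] at h5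
    have hk0 : (k : ℝ) ≠ 0 := Nat.cast_ne_zero.mpr (by omega)
    have h7 : A - 1 = 0 := by
      rcases smul_eq_zero.mp h6 with h | h
      · exact absurd h hk0
      · exact h
    have hA1 : A = 1 := by
      have := sub_eq_zero.mp h7
      exact this
    left
    rw [hA1, orderOf_one]
end

section
/- In the geometric representation of a Coxeter system, if m = m(s,s') < ∞, then the product σ_s σ_{s'} restricted to the plane spanned by α_s and α_{s'} is a rotation by angle 2π/m, and hence has order exactly m. -/
open Real

theorem stmt13 (m : ℕ) (hm : 2 ≤ m)
    (B : (ℝ × ℝ) → (ℝ × ℝ) → ℝ)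
    (hB : ∀ v w : ℝ × ℝ,
      B v w = v.1 * w.1 + v.2 * w.2
        - Real.cos (π / m) * (v.1 * w.2 + v.2 * w.1))
    (σa σb f : (ℝ × ℝ) → (ℝ × ℝ))
    (hσa : ∀ v : ℝ × ℝ, σa v = v - (2 * B ((1 : ℝ), (0 : ℝ)) v) • ((1 : ℝ), (0 : ℝ)))
    (hσb : ∀ v : ℝ × ℝ, σb v = v - (2 * B ((0 : ℝ), (1 : ℝ)) v) • ((0 : ℝ), (1 : ℝ)))
    (hf : f = σa ∘ σb) :
    (f (1, 0)).1 + (f (0, 1)).2 = 2 * Real.cos (2 * π / m) ∧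
      f^[m] = id ∧ ∀ k : ℕ, 0 < k → k < m → f^[k] ≠ id := by
  have hm0 : (0:ℝ) < (m:ℝ) := by positivity
  have hm1 : (1:ℝ) < (m:ℝ) := by exact_mod_cast lt_of_lt_of_le one_lt_two hm
  set θ : ℝ := π / m with hθ
  set c : ℝ := Real.cos θ with hc
  set s : ℝ := Real.sin θ with hsdef
  have hθpos : 0 < θ := div_pos pi_pos hm0
  have hθlt : θ < π := div_lt_self pi_pos hm1
  have hspos : 0 < s := Real.sin_pos_of_pos_of_lt_pi hθpos hθlt
  have hs : s ≠ 0 := ne_of_gt hspos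
  have hf' : ∀ v : ℝ × ℝ, f v = ((4*c^2-1)*v.1 - 2*c*v.2, 2*c*v.1 - v.2) := by
    intro v
    simp only [hf, Function.comp_apply, hσa, hσb, hB, Prod.ext_iff, Prod.smul_fst,
      Prod.smul_snd, Prod.fst_sub, Prod.snd_sub, smul_eq_mul]
    constructor <;> ring
  -- recurrence for sin
  have hrec : ∀ x : ℝ, Real.sin (x + θ) = 2*c*Real.sin x - Real.sin (x - θ) := by
    intro x
    rw [Real.sin_add, Real.sin_sub, hc]
    ring
  have key : ∀ k : ℕ, ∀ v : ℝ × ℝ, f^[k] v =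
      ((Real.sin ((2*(k:ℝ)+1)*θ)/s)*v.1 - (Real.sin ((2*(k:ℝ))*θ)/s)*v.2,
       (Real.sin ((2*(k:ℝ))*θ)/s)*v.1 - (Real.sin ((2*(k:ℝ)-1)*θ)/s)*v.2) := by
    intro k
    induction k with
    | zero =>
      intro v
      simp only [Function.iterate_zero, id_eq, Nat.cast_zero]
      rw [show (2*(0:ℝ)+1)*θ = θ by ring, show (2*(0:ℝ))*θ = 0 by ring,
        show (2*(0:ℝ)-1)*θ = -θ by ring, Real.sin_zero, Real.sin_neg, ← hsdef]
      rw [Prod.ext_iff]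
      constructor
      · field_simp; ring
      · field_simp; ring
    | succ k ih =>
      intro v
      rw [Function.iterate_succ_apply', ih v, hf']
      have e2 : Real.sin ((2*((k:ℝ)+1))*θ) = 2*c*Real.sin ((2*(k:ℝ)+1)*θ) - Real.sin ((2*(k:ℝ))*θ) := by
        have h := hrec ((2*(k:ℝ)+1)*θ)
        rw [show (2*(k:ℝ)+1)*θ + θ = (2*((k:ℝ)+1))*θ by ring,
          show (2*(k:ℝ)+1)*θ - θ = (2*(k:ℝ))*θ by ring] at h
        exact h
      have e3 : Real.sin ((2*((k:ℝ)+1)+1)*θ) = 2*c*Real.sin ((2*((k:ℝ)+1))*θ) - Real.sin ((2*(k:ℝ)+1)*θ) := by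
        have h := hrec ((2*((k:ℝ)+1))*θ)
        rw [show (2*((k:ℝ)+1))*θ + θ = (2*((k:ℝ)+1)+1)*θ by ring,
          show (2*((k:ℝ)+1))*θ - θ = (2*(k:ℝ)+1)*θ by ring] at h
        exact h
      have e1 : Real.sin ((2*(k:ℝ)+1)*θ) = 2*c*Real.sin ((2*(k:ℝ))*θ) - Real.sin ((2*(k:ℝ)-1)*θ) := by
        have h := hrec ((2*(k:ℝ))*θ)
        rw [show (2*(k:ℝ))*θ + θ = (2*(k:ℝ)+1)*θ by ring,
          show (2*(k:ℝ))*θ - θ = (2*(k:ℝ)-1)*θ by ring] at h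
        exact h
      push_cast
      rw [show (2*((k:ℝ)+1)-1)*θ = (2*(k:ℝ)+1)*θ by ring]
      rw [Prod.ext_iff]
      constructor
      · simp only
        linear_combination (-(v.1)/s) * e3 + (v.2/s - 2*c*v.1/s) * e2 + (2*c*v.2/s) * e1
      · simp only
        linear_combination (-(v.1)/s) * e2 + (v.2/s) * e1
  refine ⟨?_, ?_, ?_⟩
  · rw [hf' (1,0), hf' (0,1)]
    have : 2*π/(m:ℝ) = 2*θ := by rw [hθ]; ring
    rw [this, Real.cos_two_mul]
    simp only
    ring
  · funext v
    rw [key m v]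
    have h1 : (2*(m:ℝ)+1)*θ = θ + 2*π := by
      rw [hθ]; field_simp; ring
    have h2 : (2*(m:ℝ))*θ = 2*π := by
      rw [hθ]; field_simp
    have h3 : (2*(m:ℝ)-1)*θ = 2*π - θ := by
      rw [hθ]; field_simp
    rw [h1, h2, h3, Real.sin_add_two_pi, Real.sin_two_pi, Real.sin_two_pi_sub, ← hsdef]
    rw [Prod.ext_iff]
    constructor
    · field_simp; simp only [id_eq]; ring
    · field_simp; simp only [id_eq]; ring
  · intro k hk hkm hid
    have h10 := congrFun hid (1, 0)
    rw [key k (1,0)] at h10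
    simp only [id_eq, Prod.ext_iff] at h10
    obtain ⟨ha, hb⟩ := h10
    have hb' : Real.sin ((2*(k:ℝ))*θ) = 0 := by
      have : Real.sin ((2*(k:ℝ))*θ)/s = 0 := by linarith [hb]
      field_simp at this
      exact this.trans (mul_zero s)
    rw [Real.sin_eq_zero_iff] at hb'
    obtain ⟨n, hn⟩ := hb'
    have hπ : π ≠ 0 := ne_of_gt pi_pos
    have hnm : (n:ℝ) * (m:ℝ) = 2*(k:ℝ) := by
      have : (n:ℝ) * π = 2*(k:ℝ)*(π/(m:ℝ)) := hn
      field_simp at this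
      nlinarith [this]
    have hnmz : n * (m:ℤ) = 2*(k:ℤ) := by exact_mod_cast hnm
    have hn1 : n = 1 := by
      have hk2 : 0 < 2*(k:ℤ) := by positivity
      have hkm2 : 2*(k:ℤ) < 2*(m:ℤ) := by exact_mod_cast (by omega : 2*k < 2*m)
      nlinarith [hnmz]
    have hm2k : (m:ℝ) = 2*(k:ℝ) := by
      rw [hn1] at hnm; simpa using hnm
    -- then first coordinate: sin((m+1)θ) = sin(π+θ) = -s, so ha gives -1 = 1
    have harg : (2*(k:ℝ)+1)*θ = π + θ := by
      rw [hθ, ← hm2k]; field_simp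
    rw [harg, show Real.sin (π + θ) = -s by rw [Real.sin_add]; simp [hsdef]] at ha
    rw [mul_one, mul_zero, sub_zero, neg_div, div_self hs] at ha
    linarith
end

section
/- The only quadruples of integers (k₁,k₂,k₃,k₄) with each kᵢ ≥ 3, such that both {k₁,k₂,k₃} and {k₂,k₃,k₄} lie among the six Schläfli symbols {(3,3,3),(3,3,4),(3,3,5),(3,4,3),(4,3,3),(5,3,3)}, and satisfying cos²(π/k₂)/cos²(θ₁) + cos²(π/k₃)/sin²(π/k₄) = 1 with θ₁ = π/2 − π/k₁, are (3,3,4,3), (3,4,3,3), and (4,3,3,4). -/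
open Real

lemma sin_sq_pi_div_five' : Real.sin (π/5) ^ 2 = (10 - 2*Real.sqrt 5)/16 := by
  have h : Real.sin (π/5) ^ 2 = 1 - Real.cos (π/5) ^ 2 := by
    have := Real.sin_sq_add_cos_sq (π/5); linarith
  rw [h, Real.cos_pi_div_five]
  have h5 : Real.sqrt 5 ^ 2 = 5 := Real.sq_sqrt (by norm_num)
  nlinarith [h5]

lemma sqrt5_lt : Real.sqrt 5 < 3 := by
  nlinarith [Real.sq_sqrt (show (0:ℝ) ≤ 5 by norm_num), Real.sqrt_nonneg 5]

lemma sqrt5_gt : (2:ℝ) < Real.sqrt 5 := by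
  nlinarith [Real.sq_sqrt (show (0:ℝ) ≤ 5 by norm_num), Real.sqrt_nonneg 5]

theorem stmt18 (k1 k2 k3 k4 : ℕ) :
    (3 ≤ k1 ∧ 3 ≤ k2 ∧ 3 ≤ k3 ∧ 3 ≤ k4 ∧
      (k1, k2, k3) ∈ ({(3,3,3), (3,3,4), (3,3,5), (3,4,3), (4,3,3), (5,3,3)} :
        Set (ℕ × ℕ × ℕ)) ∧
      (k2, k3, k4) ∈ ({(3,3,3), (3,3,4), (3,3,5), (3,4,3), (4,3,3), (5,3,3)} :
        Set (ℕ × ℕ × ℕ)) ∧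
      Real.cos (π / k2) ^ 2 / Real.cos (π / 2 - π / k1) ^ 2
        + Real.cos (π / k3) ^ 2 / Real.sin (π / k4) ^ 2 = 1) ↔
    (k1, k2, k3, k4) ∈ ({(3,3,4,3), (3,4,3,3), (4,3,3,4)} :
      Set (ℕ × ℕ × ℕ × ℕ)) := by
  constructor
  · rintro ⟨-, -, -, -, h5, h6, heq⟩
    simp only [Set.mem_insert_iff, Set.mem_singleton_iff, Prod.mk.injEq] at h5 h6 ⊢
    have hs5 := sin_sq_pi_div_five'
    have hlt := sqrt5_lt
    have hgt := sqrt5_gt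
    have h3sq : (Real.sqrt 3 / 2) ^ 2 = 3 / 4 := by
      rw [div_pow, Real.sq_sqrt] <;> norm_num
    have h2sq : (Real.sqrt 2 / 2) ^ 2 = 1 / 2 := by
      rw [div_pow, Real.sq_sqrt] <;> norm_num
    have hne : (10 : ℝ) - 2 * Real.sqrt 5 ≠ 0 := by nlinarith
    rcases h5 with ⟨h1,h2,h3⟩|⟨h1,h2,h3⟩|⟨h1,h2,h3⟩|⟨h1,h2,h3⟩|⟨h1,h2,h3⟩|⟨h1,h2,h3⟩ <;>
      rcases h6 with ⟨g1,g2,g3⟩|⟨g1,g2,g3⟩|⟨g1,g2,g3⟩|⟨g1,g2,g3⟩|⟨g1,g2,g3⟩|⟨g1,g2,g3⟩ <;>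
      subst h1 <;> subst h2 <;> subst h3 <;> first
        | omega
        | (subst g3 <;>
           simp only [Real.cos_pi_div_two_sub] at heq <;>
           norm_num [Real.cos_pi_div_three, Real.sin_pi_div_three,
             Real.cos_pi_div_four, Real.sin_pi_div_four,
             Real.cos_pi_div_five, hs5, h3sq, h2sq] at heq <;>
           norm_num [Real.cos_pi_div_three, Real.sin_pi_div_three,
             Real.cos_pi_div_four, Real.sin_pi_div_four,
             Real.cos_pi_div_five, hs5, h3sq, h2sq] at ⊢ <;>
           (try field_simp [hne] at heq) <;>
           nlinarith [heq, hlt, hgt])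
  · intro h
    simp only [Set.mem_insert_iff, Set.mem_singleton_iff, Prod.mk.injEq] at h
    rcases h with ⟨h1,h2,h3,h4⟩|⟨h1,h2,h3,h4⟩|⟨h1,h2,h3,h4⟩ <;>
      subst h1 <;> subst h2 <;> subst h3 <;> subst h4 <;>
      refine ⟨by norm_num, by norm_num, by norm_num, by norm_num, by simp, by simp, ?_⟩ <;>
      simp only [Real.cos_pi_div_two_sub] <;>
      norm_num [Real.cos_pi_div_three, Real.sin_pi_div_three,
        Real.cos_pi_div_four, Real.sin_pi_div_four] <;>
      ring_nf <;> norm_num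
end
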